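/- For every nonempty finite set P ⊆ ℝ^d, the center c* of the smallest enclosing ball of P lies in the convex hull of P. -/

import Mathlib

/-- For every nonempty finite set `P ⊆ ℝ^d`, the center `c*` of the
smallest enclosing ball of `P` (i.e., any minimizer of the farthest-distance
function) lies in the convex hull of `P`. -/
theorem seb_center_mem_convexHull (d : ℕ) (hd : 1 ≤ d)
    (P : Finset (EuclideanSpace ℝ (Fin d))) (hP : P.Nonempty)
    (c : EuclideanSpace ℝ (Fin d))
    (hc : ∀ c' : EuclideanSpace ℝ (Fin d),
      P.sup' hP (fun p => dist c p) ≤ P.sup' hP (fun p => dist c' p)) :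
    c ∈ convexHull ℝ (P : Set (EuclideanSpace ℝ (Fin d))) := by
  by_contra hcK
  set K : Set (EuclideanSpace ℝ (Fin d)) := convexHull ℝ (P : Set (EuclideanSpace ℝ (Fin d)))
  have hKconv : Convex ℝ K := convex_convexHull ℝ _
  have hKcomp : IsCompact K := P.finite_toSet.isCompact_convexHull ℝ
  obtain ⟨v, hvK, hv⟩ := exists_norm_eq_iInf_of_complete_convex
    ⟨hP.choose, subset_convexHull ℝ _ (hP.choose_spec)⟩ hKcomp.isComplete hKconv c
  have hinner : ∀ w ∈ K, inner ℝ (c - v) (w - v) ≤ (0 : ℝ) :=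
    (norm_eq_iInf_iff_real_inner_le_zero hKconv hvK).mp hv
  have hcv : c ≠ v := fun h => hcK (h ▸ hvK)
  have key : ∀ p ∈ P, dist v p < dist c p := by
    intro p hp
    have hpK : p ∈ K := subset_convexHull ℝ _ hp
    have h1 : (inner ℝ (c - v) (p - v) : ℝ) ≤ 0 := hinner p hpK
    have hsq : ‖c - p‖ ^ 2 = ‖c - v‖ ^ 2 + 2 * (inner ℝ (c - v) (v - p) : ℝ) + ‖v - p‖ ^ 2 := by
      have h3 : c - p = (c - v) + (v - p) := by abel
      rw [h3, norm_add_sq_real]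
    have h2 : (inner ℝ (c - v) (v - p) : ℝ) = - (inner ℝ (c - v) (p - v) : ℝ) := by
      rw [← inner_neg_right, neg_sub]
    have hpos : 0 < ‖c - v‖ ^ 2 := pow_pos (norm_sub_pos_iff.mpr hcv) 2
    have hlt : ‖v - p‖ ^ 2 < ‖c - p‖ ^ 2 := by
      rw [hsq, h2]; nlinarith
    have := lt_of_pow_lt_pow_left₀ 2 (norm_nonneg _) hlt
    simpa [dist_eq_norm] using this
  obtain ⟨p0, hp0, hp0eq⟩ := Finset.exists_mem_eq_sup' hP (fun p => dist v p)
  have h1 : P.sup' hP (fun p => dist v p) < P.sup' hP (fun p => dist c p) := by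
    rw [hp0eq]
    exact lt_of_lt_of_le (key p0 hp0) (Finset.le_sup' _ hp0)
  exact absurd (hc v) (not_le.mpr h1)
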